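/- For each fixed n ≥ 1 and for |z| < 1, the power series Σ_{k=0}^{∞} c_n^{(k)} z^k converges to n!/(1-z)_n, where (x)_n = x(x+1)···(x+n-1) is the Pochhammer symbol. -/

import Mathlib

/-- Roman harmonic number `c_n^{(k)}` as a real number. -/
noncomputable def romanHarmonic (n k : ℕ) : ℝ :=
  ∑ j ∈ Finset.Icc 1 n, (-1 : ℝ) ^ (j - 1) * (n.choose j) / (j : ℝ) ^ k

lemma key_partial (m : ℕ) : ∀ x : ℂ, (∀ i ∈ Finset.range (m+1), x + (i:ℂ) ≠ 0) →
    ∑ j ∈ Finset.range (m+1), (-1:ℂ)^j * (m.choose j) / (x + j)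
      = (m.factorial : ℂ) / ∏ i ∈ Finset.range (m+1), (x + (i:ℂ)) := by
  induction m with
  | zero => intro x hx; simp
  | succ m ih =>
    intro x hx
    have hx1 : ∀ i ∈ Finset.range (m+1), x + (i:ℂ) ≠ 0 := by
      intro i hi; exact hx i (Finset.mem_range.mpr (by simp at hi; omega))
    have hx' : ∀ i ∈ Finset.range (m+1), (x+1) + (i:ℂ) ≠ 0 := by
      intro i hi
      have h := hx (i+1) (Finset.mem_range.mpr (by simp at hi; omega))
      push_cast at h
      intro hc; exact h (by linear_combination hc)
    have hP : (∏ i ∈ Finset.range (m+1), (x + (i:ℂ))) ≠ 0 :=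
      Finset.prod_ne_zero_iff.mpr hx1
    have hQ : (∏ i ∈ Finset.range (m+1), ((x+1) + (i:ℂ))) ≠ 0 :=
      Finset.prod_ne_zero_iff.mpr hx'
    have hx0 : x ≠ 0 := by simpa using hx 0 (by simp)
    have htop : x + ((m:ℂ)+1) ≠ 0 := by
      have := hx (m+1) (by simp); push_cast at this; exact this
    set g : ℕ → ℂ := fun j => (-1:ℂ)^j * (m.choose j) / (x + (j:ℂ)) with hg
    -- split the sum
    rw [Finset.sum_range_succ']
    have hsplit : ∀ j ∈ Finset.range (m+1),
        (-1:ℂ)^(j+1) * (((m+1).choose (j+1) : ℕ)) / (x + ((j+1:ℕ):ℂ))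
          = g (j+1) + (-((-1:ℂ)^j * (m.choose j) / ((x+1) + (j:ℂ)))) := by
      intro j hj
      have h := hx (j+1) (Finset.mem_range.mpr (by simp at hj; omega))
      have h2 := hx' j (Finset.mem_range.mpr (by simp at hj; omega))
      rw [Nat.choose_succ_succ]
      simp only [hg]
      push_cast at h ⊢
      field_simp
      ring
    rw [Finset.sum_congr rfl hsplit, Finset.sum_add_distrib]
    have e1 : (∑ j ∈ Finset.range (m+1), g (j+1))
        + (-1:ℂ)^0 * (((m+1).choose 0 : ℕ)) / (x + ((0:ℕ):ℂ))
        = ∑ j ∈ Finset.range (m+1), g j := by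
      have h0 : (-1:ℂ)^0 * (((m+1).choose 0 : ℕ)) / (x + ((0:ℕ):ℂ)) = g 0 := by
        simp [hg]
      rw [h0, ← Finset.sum_range_succ' g (m+1), Finset.sum_range_succ]
      simp [hg]
    have e2 : ∑ j ∈ Finset.range (m+1), (-((-1:ℂ)^j * (m.choose j) / ((x+1) + (j:ℂ))))
        = -((m.factorial : ℂ) / ∏ i ∈ Finset.range (m+1), ((x+1) + (i:ℂ))) := by
      rw [Finset.sum_neg_distrib, ih (x+1) hx']
    rw [add_right_comm, e1, e2, ih x hx1]
    have hrel : (∏ i ∈ Finset.range (m+1), ((x+1) + (i:ℂ))) * x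
        = (∏ i ∈ Finset.range (m+1), (x + (i:ℂ))) * (x + ((m:ℂ)+1)) := by
      have h1 : ∏ i ∈ Finset.range (m+2), (x + (i:ℂ))
          = (∏ i ∈ Finset.range (m+1), ((x+1) + (i:ℂ))) * x := by
        rw [Finset.prod_range_succ']
        congr 1
        · exact Finset.prod_congr rfl (fun i _ => by push_cast; ring)
        · simp
      rw [← h1, Finset.prod_range_succ]
      push_cast; ring
    set P := ∏ i ∈ Finset.range (m+1), (x + (i:ℂ)) with hPdef
    set Q := ∏ i ∈ Finset.range (m+1), ((x+1) + (i:ℂ)) with hQdef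
    have hRR : ∏ i ∈ Finset.range (m+1+1), (x+(i:ℂ)) = P * (x + ((m:ℂ)+1)) := by
      rw [hPdef, Finset.prod_range_succ]
      congr 1
      push_cast; ring
    rw [hRR, Nat.factorial_succ]
    push_cast
    rw [← sub_eq_add_neg, div_sub_div _ _ hP hQ,
      div_eq_div_iff (mul_ne_zero hP hQ) (mul_ne_zero hP htop)]
    linear_combination ((m.factorial : ℂ)) * P * hrel

theorem roman_harmonic_ogf (n : ℕ) (hn : 1 ≤ n) (z : ℂ) (hz : ‖z‖ < 1) :
    HasSum (fun k : ℕ => (romanHarmonic n k : ℂ) * z ^ k)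
      ((Nat.factorial n : ℂ) / ∏ i ∈ Finset.range n, (1 - z + (i : ℂ))) := by
  obtain ⟨m, rfl⟩ : ∃ m, n = m + 1 := ⟨n - 1, (Nat.sub_add_cancel hn).symm⟩
  have hzre : z.re < 1 := by
    have h1 : |z.re| ≤ ‖z‖ := Complex.abs_re_le_norm z
    calc z.re ≤ |z.re| := le_abs_self _
    _ ≤ ‖z‖ := h1
    _ < 1 := hz
  have hnz : ∀ i ∈ Finset.range (m+1), (1 - z) + (i:ℂ) ≠ 0 := by
    intro i _ hc
    have : ((1 - z) + (i:ℂ)).re = 0 := by rw [hc]; simp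
    simp [Complex.sub_re, Complex.add_re] at this
    have : z.re = 1 + i := by linarith [this]
    have h9 : (0:ℝ) ≤ (i:ℝ) := Nat.cast_nonneg i
    linarith
  -- geometric series for each j
  have hgeo : ∀ j ∈ Finset.Icc 1 (m+1),
      HasSum (fun k : ℕ => ((-1:ℂ)^(j-1) * (((m+1).choose j : ℕ))) * (z/(j:ℂ))^k)
        (((-1:ℂ)^(j-1) * (((m+1).choose j : ℕ))) * (1 - z/(j:ℂ))⁻¹) := by
    intro j hj
    have hj1 : 1 ≤ j := (Finset.mem_Icc.mp hj).1
    have hnorm : ‖z/(j:ℂ)‖ < 1 := by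
      rw [norm_div]
      have hjn : (1:ℝ) ≤ ‖((j:ℕ):ℂ)‖ := by
        rw [Complex.norm_natCast]; exact_mod_cast hj1
      calc ‖z‖ / ‖((j:ℕ):ℂ)‖ ≤ ‖z‖ / 1 := by
            apply div_le_div_of_nonneg_left (norm_nonneg z) one_pos hjn |>.trans_eq rfl
      _ = ‖z‖ := div_one _
      _ < 1 := hz
    exact (hasSum_geometric_of_norm_lt_one hnorm).mul_left _
  have H := hasSum_sum hgeo
  have hfun : (fun k : ℕ => (romanHarmonic (m+1) k : ℂ) * z ^ k)
      = fun k : ℕ => ∑ j ∈ Finset.Icc 1 (m+1),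
          ((-1:ℂ)^(j-1) * (((m+1).choose j : ℕ))) * (z/(j:ℂ))^k := by
    funext k
    rw [romanHarmonic]
    push_cast
    rw [Finset.sum_mul]
    apply Finset.sum_congr rfl
    intro j hj
    have hj1 : 1 ≤ j := (Finset.mem_Icc.mp hj).1
    have hj0 : ((j:ℕ):ℂ) ≠ 0 := Nat.cast_ne_zero.mpr (by omega)
    rw [div_pow]
    field_simp
  have hval : ∑ j ∈ Finset.Icc 1 (m+1),
      ((-1:ℂ)^(j-1) * (((m+1).choose j : ℕ))) * (1 - z/(j:ℂ))⁻¹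
      = (((m+1).factorial : ℕ) : ℂ) / ∏ i ∈ Finset.range (m+1), (1 - z + (i:ℂ)) := by
    rw [← Finset.Ico_add_one_right_eq_Icc, Finset.sum_Ico_eq_sum_range]
    simp only [Nat.add_sub_cancel, show m + 1 + 1 - 1 = m + 1 from rfl]
    have step : ∀ i ∈ Finset.range (m+1),
        ((-1:ℂ)^((1+i)-1) * (((m+1).choose (1+i) : ℕ))) * (1 - z/(((1+i:ℕ)):ℂ))⁻¹
          = ((m:ℂ)+1) * ((-1:ℂ)^i * ((m.choose i : ℕ)) / ((1 - z) + (i:ℂ))) := by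
      intro i hi
      have hj0 : (((1+i:ℕ)):ℂ) ≠ 0 := Nat.cast_ne_zero.mpr (by omega)
      have hd : ((1 - z) + (i:ℂ)) ≠ 0 := hnz i hi
      have hd' : (((1+i:ℕ)):ℂ) - z ≠ 0 := by
        intro hc; apply hd; push_cast at hc ⊢; linear_combination hc
      have hch : (((m+1).choose (1+i) : ℕ) : ℂ) * (((1+i:ℕ)):ℂ)
          = ((m:ℂ)+1) * ((m.choose i : ℕ) : ℂ) := by
        have h2 : ((m+1).choose (1+i)) * (1+i) = (m+1) * (m.choose i) := by
          rw [Nat.add_comm 1 i]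
          exact (Nat.add_one_mul_choose_eq m i).symm
        exact_mod_cast congrArg (Nat.cast : ℕ → ℂ) h2
      have h1 : (1 - z/(((1+i:ℕ)):ℂ)) = ((((1+i:ℕ)):ℂ) - z)/(((1+i:ℕ)):ℂ) := by
        rw [eq_div_iff hj0, sub_mul, one_mul, div_mul_cancel₀ _ hj0]
      rw [h1, inv_div]
      simp only [Nat.add_sub_cancel_left]
      push_cast at hch hd' hd hj0 ⊢
      field_simp
      linear_combination ((1:ℂ) - z + (i:ℂ)) * hch
    rw [Finset.sum_congr rfl step, ← Finset.mul_sum, key_partial m (1-z) hnz,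
      Nat.factorial_succ]
    push_cast
    ring
  rw [hfun, ← hval]
  exact H
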